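/- Suppose that P is a paraboloid of opening a > 0 that touches a continuous function U : ℝ^{n+1} → ℝ from below at (x₀,z₀) in a convex set S ⊂ ℝ^{n+1}. Then for any ã ≥ a, there exists a paraboloid P̃ of opening ã that touches U from below at (x₀,z₀) in S. -/

import Mathlib

open Set MeasureTheory
open scoped ENNReal

noncomputable section

/-- `h(z) = (s²/(1-s))|z|^{1/s}`. -/
def hFun (s z : ℝ) : ℝ := s ^ 2 / (1 - s) * |z| ^ (1 / s)

/-- `h'(z) = (s/(1-s))|z|^{1/s-2} z` (with `h'(0)=0`). -/
def hDeriv (s z : ℝ) : ℝ := s / (1 - s) * |z| ^ (1 / s - 2) * z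

/-- Monge–Ampère quasi-distance of `h`. -/
def deltaH (s z₀ z : ℝ) : ℝ := hFun s z - hFun s z₀ - hDeriv s z₀ * (z - z₀)

/-- Monge–Ampère quasi-distance of `φ(x)=|x|²/2` on `ℝⁿ`. -/
def deltaE (n : ℕ) (x₀ x : Fin n → ℝ) : ℝ := (∑ i, (x i - x₀ i) ^ 2) / 2

/-- Monge–Ampère quasi-distance of `Φ(x,z) = |x|²/2 + h(z)`. -/
def deltaPhi (n : ℕ) (s : ℝ) (p q : (Fin n → ℝ) × ℝ) : ℝ :=
  deltaE n p.1 q.1 + deltaH s p.2 q.2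

/-- Monge–Ampère section of `Φ` of radius `R` centered at `p`. -/
def sectPhi (n : ℕ) (s R : ℝ) (p : (Fin n → ℝ) × ℝ) : Set ((Fin n → ℝ) × ℝ) :=
  {q | deltaPhi n s p q < R}

/-- Monge–Ampère section of `h` of radius `R` centered at `z₀`. -/
def sectH (s R z₀ : ℝ) : Set ℝ := {z | deltaH s z₀ z < R}

/-- One-dimensional section of `t ↦ t²/2` of radius `R` centered at `t₀`. -/
def sect1 (R t₀ : ℝ) : Set ℝ := {t | (t - t₀) ^ 2 / 2 < R}

/-- Monge–Ampère cube of radius `R` centered at `p`. -/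
def cube (n : ℕ) (s R : ℝ) (p : (Fin n → ℝ) × ℝ) : Set ((Fin n → ℝ) × ℝ) :=
  {q | (∀ i, q.1 i ∈ sect1 R (p.1 i)) ∧ q.2 ∈ sectH s R p.2}

/-- Monge–Ampère measure of `Φ`: `μ_Φ(E) = ∫_E |z|^{1/s-2} dz dx`. -/
def muPhi (n : ℕ) (s : ℝ) (E : Set ((Fin n → ℝ) × ℝ)) : ℝ≥0∞ :=
  ∫⁻ p in E, ENNReal.ofReal (|p.2| ^ (1 / s - 2))

/-- Monge–Ampère measure of `h`: `μ_h(I) = ∫_I |z|^{1/s-2} dz`. -/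
def muH (s : ℝ) (I : Set ℝ) : ℝ≥0∞ :=
  ∫⁻ z in I, ENNReal.ofReal (|z| ^ (1 / s - 2))

/-- Second partial derivative `∂_{ij}` in the `x`-variables. -/
def Dxx (n : ℕ) (U : (Fin n → ℝ) × ℝ → ℝ) (i j : Fin n) (p : (Fin n → ℝ) × ℝ) : ℝ :=
  fderiv ℝ (fun y : Fin n → ℝ =>
    fderiv ℝ (fun y' : Fin n → ℝ => U (y', p.2)) y (Pi.single j 1)) p.1 (Pi.single i 1)

/-- Second partial derivative `∂_{zz}`. -/
def Dzz (n : ℕ) (U : (Fin n → ℝ) × ℝ → ℝ) (p : (Fin n → ℝ) × ℝ) : ℝ :=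
  deriv (fun w => deriv (fun w' => U (p.1, w')) w) p.2

/-- The extension operator `a^{ij}(x) ∂_{ij} + |z|^{2-1/s} ∂_{zz}`. -/
def extOp (n : ℕ) (s : ℝ) (A : (Fin n → ℝ) → Fin n → Fin n → ℝ)
    (U : (Fin n → ℝ) × ℝ → ℝ) (p : (Fin n → ℝ) × ℝ) : ℝ :=
  (∑ i, ∑ j, A p.1 i j * Dxx n U i j p) + |p.2| ^ (2 - 1 / s) * Dzz n U p

/-- Bounded measurable, symmetric, uniformly elliptic coefficients on `Ω`. -/
def UniformlyElliptic (n : ℕ) (lam Lam : ℝ) (Ω : Set (Fin n → ℝ))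
    (A : (Fin n → ℝ) → Fin n → Fin n → ℝ) : Prop :=
  (∀ i j, Measurable fun x => A x i j) ∧
  (∀ x i j, A x i j = A x j i) ∧
  (∀ x ∈ Ω, ∀ ξ : Fin n → ℝ,
    lam * ∑ i, ξ i ^ 2 ≤ ∑ i, ∑ j, A x i j * ξ i * ξ j ∧
    (∑ i, ∑ j, A x i j * ξ i * ξ j) ≤ Lam * ∑ i, ξ i ^ 2)

/-- A paraboloid of opening `a > 0` with vertex `v`. -/
def IsParaboloid (n : ℕ) (s a : ℝ) (v : (Fin n → ℝ) × ℝ) (P : (Fin n → ℝ) × ℝ → ℝ) : Prop :=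
  ∃ c : ℝ, ∀ p, P p = -a * deltaPhi n s v p + c

/-- `P` touches `U` from below at `p₀` in the set `S`. -/
def TouchesBelow (n : ℕ) (P U : (Fin n → ℝ) × ℝ → ℝ)
    (S : Set ((Fin n → ℝ) × ℝ)) (p₀ : (Fin n → ℝ) × ℝ) : Prop :=
  P p₀ = U p₀ ∧ ∀ p ∈ S, P p ≤ U p

lemma core_ineq {q : ℝ} (hq : 1 < q) (z₀ z : ℝ) :
    |z₀| ^ q + q * |z₀| ^ (q - 2) * z₀ * (z - z₀) ≤ |z| ^ q := by
  rcases eq_or_ne z₀ 0 with h | h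
  · simp [h, Real.zero_rpow (by positivity : q ≠ 0)]
    positivity
  · have ht : (0:ℝ) < |z₀| := abs_pos.mpr h
    have hu : (0:ℝ) ≤ |z| := abs_nonneg z
    set t := |z₀| with htdef
    set u := |z| with hudef
    -- step 1: z₀ * (z - z₀) ≤ t * (u - t)
    have h1 : z₀ * (z - z₀) ≤ t * (u - t) := by
      have : z₀ * z ≤ t * u := by
        calc z₀ * z ≤ |z₀ * z| := le_abs_self _
        _ = t * u := abs_mul z₀ z
      have ht2 : z₀ * z₀ = t * t := by
        rw [htdef, ← abs_mul, abs_mul_self]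
      nlinarith
    have h2 : q * t ^ (q - 2) * z₀ * (z - z₀) ≤ q * t ^ (q - 2) * (t * (u - t)) := by
      have : (0:ℝ) ≤ q * t ^ (q - 2) := by positivity
      calc q * t ^ (q - 2) * z₀ * (z - z₀) = q * t ^ (q-2) * (z₀ * (z - z₀)) := by ring
      _ ≤ q * t ^ (q - 2) * (t * (u - t)) := by
          exact mul_le_mul_of_nonneg_left h1 this
    -- step 2 : Bernoulli
    have hx : (-1:ℝ) ≤ u / t - 1 := by
      have : 0 ≤ u / t := by positivity
      linarith
    have hb := one_add_mul_self_le_rpow_one_add hx hq.le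
    have hrw : (1 + (u / t - 1)) = u / t := by ring
    rw [hrw] at hb
    have hdiv : (u / t) ^ q = u ^ q / t ^ q := Real.div_rpow hu ht.le q
    rw [hdiv] at hb
    have htq : (0:ℝ) < t ^ q := Real.rpow_pos_of_pos ht q
    have hb2 : (1 + q * (u / t - 1)) * t ^ q ≤ u ^ q := by
      calc (1 + q * (u / t - 1)) * t ^ q ≤ (u ^ q / t ^ q) * t ^ q :=
            mul_le_mul_of_nonneg_right hb htq.le
      _ = u ^ q := by field_simp
    -- rewrite powers
    have e1 : t ^ (q - 2) * t = t ^ (q - 1) := by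
      rw [show q - 1 = (q - 2) + 1 by ring, Real.rpow_add_one ht.ne' ]
    have e2 : t ^ (q - 1) * t = t ^ q := by
      rw [← Real.rpow_add_one ht.ne' (q - 1)]; norm_num
    have e3 : t ^ q / t = t ^ (q - 1) := by
      rw [← Real.rpow_sub_one ht.ne' ]
    have e4 : t ^ q * (u / t) = t ^ (q - 1) * u := by
      rw [mul_div_assoc', mul_comm (t ^ q) u, mul_div_assoc, e3]; ring
    calc t ^ q + q * t ^ (q - 2) * z₀ * (z - z₀)
        ≤ t ^ q + q * t ^ (q - 2) * (t * (u - t)) := by linarith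
      _ = (1 + q * (u / t - 1)) * t ^ q := by
          have : q * t ^ (q - 2) * (t * (u - t)) = q * (t ^ (q-1) * u - t ^ q) := by
            rw [← e2, ← e1]; ring
          rw [this]
          have : (1 + q * (u / t - 1)) * t ^ q = t ^ q + q * (t ^ q * (u/t) - t ^ q) := by ring
          rw [this, e4]
      _ ≤ u ^ q := hb2

lemma deltaH_nonneg {s : ℝ} (hs0 : 0 < s) (hs1 : s < 1) (z₀ z : ℝ) :
    0 ≤ deltaH s z₀ z := by
  have hq : 1 < 1 / s := (one_lt_div hs0).mpr hs1
  have hK : (0:ℝ) < s ^ 2 / (1 - s) := by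
    apply div_pos (by positivity); linarith
  have hcore := core_ineq hq z₀ z
  unfold deltaH hFun hDeriv
  have hsne : s ≠ 0 := hs0.ne'
  have h1sne : (1:ℝ) - s ≠ 0 := by linarith
  have hsd : s / (1 - s) = s ^ 2 / (1 - s) * (1 / s) := by
    field_simp
  rw [hsd]
  nlinarith [mul_le_mul_of_nonneg_left hcore hK.le]

lemma hDeriv_surj {s : ℝ} (hs0 : 0 < s) (hs1 : s < 1) (w : ℝ) :
    ∃ z, hDeriv s z = w := by
  have h1s : (0:ℝ) < 1 - s := by linarith
  have hC : (0:ℝ) < s / (1 - s) := div_pos hs0 h1s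
  set C := s / (1 - s) with hCdef
  -- first the nonneg case
  have main : ∀ w : ℝ, 0 ≤ w → ∃ z, hDeriv s z = w := by
    intro w hw
    rcases eq_or_lt_of_le hw with h0 | h0
    · exact ⟨0, by simp [hDeriv, ← h0]⟩
    · refine ⟨(w / C) ^ (s / (1 - s)), ?_⟩
      have hwC : (0:ℝ) < w / C := div_pos h0 hC
      have hz : (0:ℝ) < (w / C) ^ (s / (1 - s)) := Real.rpow_pos_of_pos hwC _
      unfold hDeriv
      rw [abs_of_pos hz]
      set z := (w / C) ^ (s / (1 - s)) with hzdef
      have e1 : z ^ (1 / s - 2) * z = z ^ (1 / s - 1) := by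
        rw [show (1/s - 1 : ℝ) = (1/s - 2) + 1 by ring, Real.rpow_add_one hz.ne' ]
      rw [mul_assoc, e1, hzdef, ← Real.rpow_mul hwC.le]
      have : s / (1 - s) * (1 / s - 1) = 1 := by field_simp
      rw [this, Real.rpow_one, ← hCdef, mul_div_cancel₀ _ hC.ne']
  rcases le_or_gt 0 w with hw | hw
  · exact main w hw
  · obtain ⟨z, hz⟩ := main (-w) (by linarith)
    refine ⟨-z, ?_⟩
    unfold hDeriv at hz ⊢
    rw [abs_neg]; linarith [hz]

lemma deltaPhi_nonneg {n : ℕ} {s : ℝ} (hs0 : 0 < s) (hs1 : s < 1)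
    (p q : (Fin n → ℝ) × ℝ) : 0 ≤ deltaPhi n s p q := by
  have h1 : 0 ≤ deltaE n p.1 q.1 := by
    unfold deltaE; positivity
  have h2 := deltaH_nonneg hs0 hs1 p.2 q.2
  unfold deltaPhi; linarith

lemma deltaPhi_self (n : ℕ) (s : ℝ) (p : (Fin n → ℝ) × ℝ) : deltaPhi n s p p = 0 := by
  simp [deltaPhi, deltaE, deltaH]

/-- Lemma 6.3: if a paraboloid of opening `a > 0` touches a continuous
function `U` from below at `(x₀,z₀)` in a convex set `S`, then for any `ã ≥ a` there is a
paraboloid of opening `ã` touching `U` from below at the same point in `S`. -/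
theorem touch_with_narrower_opening
    (n : ℕ) (hn : 1 ≤ n) (s : ℝ) (hs0 : 0 < s) (hs1 : s < 1)
    (S : Set ((Fin n → ℝ) × ℝ)) (hS : Convex ℝ S)
    (U : (Fin n → ℝ) × ℝ → ℝ) (hU : Continuous U)
    (a : ℝ) (ha : 0 < a) (v : (Fin n → ℝ) × ℝ)
    (P : (Fin n → ℝ) × ℝ → ℝ) (hP : IsParaboloid n s a v P)
    (p₀ : (Fin n → ℝ) × ℝ) (htouch : TouchesBelow n P U S p₀)
    (a' : ℝ) (ha' : a ≤ a') :
    ∃ (P' : (Fin n → ℝ) × ℝ → ℝ) (v' : (Fin n → ℝ) × ℝ),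
      IsParaboloid n s a' v' P' ∧ TouchesBelow n P' U S p₀ := by
  obtain ⟨c, hPc⟩ := hP
  obtain ⟨heq, hle⟩ := htouch
  have ha'0 : 0 < a' := lt_of_lt_of_le ha ha'
  have ha'ne : a' ≠ 0 := ha'0.ne'
  have hb : 0 ≤ a' - a := by linarith
  obtain ⟨z', hz'⟩ := hDeriv_surj hs0 hs1
    ((a * hDeriv s v.2 + (a' - a) * hDeriv s p₀.2) / a')
  set v' : (Fin n → ℝ) × ℝ := (fun i => (a * v.1 i + (a' - a) * p₀.1 i) / a', z') with hv'def
  -- the E-part identity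
  set CE : ℝ := (∑ i, (a * v.1 i ^ 2 + (a' - a) * p₀.1 i ^ 2 - a' * v'.1 i ^ 2)) / 2 with hCE
  have keyE : ∀ x : Fin n → ℝ,
      a * deltaE n v.1 x + (a' - a) * deltaE n p₀.1 x - a' * deltaE n v'.1 x = CE := by
    intro x
    unfold deltaE
    rw [hCE, mul_div_assoc', mul_div_assoc', mul_div_assoc', ← add_div,
      div_sub_div_same, Finset.mul_sum, Finset.mul_sum, Finset.mul_sum,
      ← Finset.sum_add_distrib, ← Finset.sum_sub_distrib]
    congr 1
    apply Finset.sum_congr rfl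
    intro i _
    have hv'i : v'.1 i = (a * v.1 i + (a' - a) * p₀.1 i) / a' := rfl
    rw [hv'i]
    field_simp
    ring
  -- the H-part identity
  set CH : ℝ := -(a * hFun s v.2 + (a' - a) * hFun s p₀.2 - a' * hFun s v'.2)
      + (a * hDeriv s v.2 * v.2 + (a' - a) * hDeriv s p₀.2 * p₀.2
        - a' * hDeriv s v'.2 * v'.2) with hCH
  have keyH : ∀ t : ℝ,
      a * deltaH s v.2 t + (a' - a) * deltaH s p₀.2 t - a' * deltaH s v'.2 t = CH := by
    intro t
    have hz'' : a' * hDeriv s v'.2 = a * hDeriv s v.2 + (a' - a) * hDeriv s p₀.2 := by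
      show a' * hDeriv s z' = _
      rw [hz']; field_simp
    unfold deltaH
    rw [hCH]
    linear_combination (-(hFun s t)) * (rfl : a' = a') + t * hz''
  refine ⟨fun p => P p - (a' - a) * deltaPhi n s p₀ p, v', ⟨c - CE - CH, ?_⟩, ?_, ?_⟩
  · intro p
    show P p - (a' - a) * deltaPhi n s p₀ p = _
    have hE := keyE p.1
    have hH := keyH p.2
    have := hPc p
    unfold deltaPhi at *
    linarith
  · show P p₀ - (a' - a) * deltaPhi n s p₀ p₀ = U p₀
    rw [deltaPhi_self, heq]; ring
  · intro p hp
    have h1 := hle p hp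
    have h2 := deltaPhi_nonneg hs0 hs1 p₀ p
    have h3 : 0 ≤ (a' - a) * deltaPhi n s p₀ p := mul_nonneg hb h2
    show P p - (a' - a) * deltaPhi n s p₀ p ≤ U p
    linarith
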